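/- A weak Sasakian manifold is weak K-contact: if (φ,Q,ξ,η,g) is a weak Sasakian structure on M (i.e., a weak contact metric structure with N⁽¹⁾ ≡ 0), then ξ is a Killing vector field, i.e., ξ(g(X,Y)) = g([ξ,X],Y) + g(X,[ξ,Y]) for all smooth vector fields X,Y. -/

import Mathlib

open scoped Manifold

noncomputable section

/-- Smooth vector fields on a manifold `M`, modelled as derivations of the algebra of smooth
real-valued functions on `M`. -/
abbrev VectorField {E : Type*} [NormedAddCommGroup E] [NormedSpace ℝ E]
    {H : Type*} [TopologicalSpace H] (I : ModelWithCorners ℝ E H)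
    (M : Type*) [TopologicalSpace M] [ChartedSpace H M] :=
  Derivation ℝ C^(⊤ : ℕ∞)⟮I, M; ℝ⟯ C^(⊤ : ℕ∞)⟮I, M; ℝ⟯

variable {E : Type*} [NormedAddCommGroup E] [NormedSpace ℝ E]
  {H : Type*} [TopologicalSpace H] {I : ModelWithCorners ℝ E H}
  {M : Type*} [TopologicalSpace M] [ChartedSpace H M]

/-- `dη(X,Y) = ½ (X(η(Y)) - Y(η(X)) - η([X,Y]))`. -/
def dEta (η : VectorField I M →ₗ[C^(⊤ : ℕ∞)⟮I, M; ℝ⟯] C^(⊤ : ℕ∞)⟮I, M; ℝ⟯)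
    (X Y : VectorField I M) : C^(⊤ : ℕ∞)⟮I, M; ℝ⟯ :=
  (2 : ℝ)⁻¹ • (X (η Y) - Y (η X) - η ⁅X, Y⁆)

/-- The Nijenhuis torsion `[φ,φ](X,Y) = φ²[X,Y] + [φX,φY] - φ[φX,Y] - φ[X,φY]`. -/
def nijenhuis (φ : VectorField I M → VectorField I M) (X Y : VectorField I M) :
    VectorField I M :=
  φ (φ ⁅X, Y⁆) + ⁅φ X, φ Y⁆ - φ ⁅φ X, Y⁆ - φ ⁅X, φ Y⁆

/-- `N⁽¹⁾(X,Y) = [φ,φ](X,Y) + 2 dη(X,Y) Qξ`. -/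
def N1 (φ Q : VectorField I M →ₗ[C^(⊤ : ℕ∞)⟮I, M; ℝ⟯] VectorField I M)
    (ξ : VectorField I M) (η : VectorField I M →ₗ[C^(⊤ : ℕ∞)⟮I, M; ℝ⟯] C^(⊤ : ℕ∞)⟮I, M; ℝ⟯)
    (X Y : VectorField I M) : VectorField I M :=
  nijenhuis ⇑φ X Y + ((2 : ℝ) • dEta η X Y) • Q ξ

/-- `N⁽²⁾(X,Y) = (φX)(η(Y)) - η([φX,Y]) - (φY)(η(X)) + η([φY,X])`. -/
def N2 (φ : VectorField I M →ₗ[C^(⊤ : ℕ∞)⟮I, M; ℝ⟯] VectorField I M)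
    (η : VectorField I M →ₗ[C^(⊤ : ℕ∞)⟮I, M; ℝ⟯] C^(⊤ : ℕ∞)⟮I, M; ℝ⟯)
    (X Y : VectorField I M) : C^(⊤ : ℕ∞)⟮I, M; ℝ⟯ :=
  (φ X) (η Y) - η ⁅φ X, Y⁆ - (φ Y) (η X) + η ⁅φ Y, X⁆

/-- Leibniz rule for the Lie bracket of derivations with respect to function scaling. -/
lemma bracket_smul_aux (f : C^(⊤ : ℕ∞)⟮I, M; ℝ⟯) (X Y : VectorField I M) :
    ⁅X, f • Y⁆ = f • ⁅X, Y⁆ + (X f) • Y := by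
  ext a
  simp only [Derivation.commutator_apply, Derivation.add_apply, Derivation.smul_apply,
    smul_eq_mul, Derivation.leibniz]
  ring

/-- A smooth function squaring to zero is zero. -/
lemma sq_zero_aux (f : C^(⊤ : ℕ∞)⟮I, M; ℝ⟯) (hf : f * f = 0) : f = 0 := by
  ext x
  have := congrArg (fun (h : C^(⊤ : ℕ∞)⟮I, M; ℝ⟯) => h x) hf
  exact mul_self_eq_zero.mp (by simpa using this)

lemma zero_lie_aux (X : VectorField I M) : ⁅(0 : VectorField I M), X⁆ = 0 := by
  ext a; simp [Derivation.commutator_apply]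

lemma lie_self_aux (X : VectorField I M) : ⁅X, X⁆ = 0 := by
  ext a; simp [Derivation.commutator_apply]

lemma lie_sub_aux (X A B : VectorField I M) : ⁅X, A - B⁆ = ⁅X, A⁆ - ⁅X, B⁆ := by
  ext a
  simp [Derivation.commutator_apply, map_sub]
  abel

/-- Cancel the `½` in `dEta`. -/
lemma dEta_eq_iff_aux (η : VectorField I M →ₗ[C^(⊤ : ℕ∞)⟮I, M; ℝ⟯] C^(⊤ : ℕ∞)⟮I, M; ℝ⟯)
    (X Y : VectorField I M) (c : C^(⊤ : ℕ∞)⟮I, M; ℝ⟯) (h : dEta η X Y = c) :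
    X (η Y) - Y (η X) - η ⁅X, Y⁆ = (2 : ℝ) • c := by
  rw [← h, dEta, smul_smul]
  norm_num

set_option maxHeartbeats 1000000 in
theorem weak_Sasakian_is_K_contact
    [FiniteDimensional ℝ E] [I.Boundaryless] [IsManifold I (⊤ : ℕ∞) M]
    (n : ℕ) (hn : 1 ≤ n) (hdim : Module.finrank ℝ E = 2 * n + 1)
    (φ Q : VectorField I M →ₗ[C^(⊤ : ℕ∞)⟮I, M; ℝ⟯] VectorField I M)
    (hQ : Function.Bijective Q)
    (ξ : VectorField I M)
    (η : VectorField I M →ₗ[C^(⊤ : ℕ∞)⟮I, M; ℝ⟯] C^(⊤ : ℕ∞)⟮I, M; ℝ⟯)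
    (g : VectorField I M →ₗ[C^(⊤ : ℕ∞)⟮I, M; ℝ⟯] VectorField I M →ₗ[C^(⊤ : ℕ∞)⟮I, M; ℝ⟯] C^(⊤ : ℕ∞)⟮I, M; ℝ⟯)
    (ν : ℝ) (hν : 0 < ν)
    (hφφ : ∀ X, φ (φ X) = -(Q X) + η X • Q ξ)
    (hηξ : η ξ = 1)
    (hQξ : Q ξ = ν • ξ)
    (hD : ∀ X, η X = 0 → η (φ X) = 0)
    (hg_symm : ∀ X Y, g X Y = g Y X)
    (hg_pos : ∀ X (x : M), 0 ≤ g X X x)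
    (hg_def : ∀ X, g X X = 0 → X = 0)
    (hcompat : ∀ X Y, g (φ X) (φ Y) = g X (Q Y) - η X * η (Q Y))
    (hcontact : ∀ X Y, g X (φ Y) = dEta η X Y)
    (hN1 : ∀ X Y, N1 φ Q ξ η X Y = 0)
    :
    ∀ X Y, ξ (g X Y) = g ⁅ξ, X⁆ Y + g X ⁅ξ, Y⁆ := by
  -- φ²ξ = 0
  have hφφξ : φ (φ ξ) = 0 := by
    rw [hφφ, hηξ, one_smul]; abel
  -- antisymmetry of dEta
  have hdanti : ∀ U V, dEta η U V = - dEta η V U := by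
    intro U V
    rw [dEta, dEta, ← smul_neg]
    congr 1
    rw [show ⁅V, U⁆ = -⁅U, V⁆ from (lie_skew V U).symm, map_neg]
    abel
  -- η ∘ φ in terms of η(φξ)
  have hηφ' : ∀ X, η (φ X) = η X * η (φ ξ) := by
    intro X
    have h0 : η (X - η X • ξ) = 0 := by
      rw [map_sub, map_smul, hηξ, smul_eq_mul, mul_one, sub_self]
    have h1 := hD _ h0
    rw [map_sub, map_smul, map_sub, map_smul, smul_eq_mul, sub_eq_zero] at h1
    exact h1
  -- η(φξ) = 0
  have hηφξ : η (φ ξ) = 0 := by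
    have h := hηφ' (φ ξ)
    rw [hφφξ, map_zero] at h
    exact sq_zero_aux _ h.symm
  have hηφ : ∀ X, η (φ X) = 0 := fun X => by rw [hηφ' X, hηφξ, mul_zero]
  -- φ ξ = 0
  have hφξ : φ ξ = 0 := by
    apply hg_def
    have h1 : g (φ ξ) (φ ξ) = dEta η (φ ξ) ξ := hcontact _ _
    have h2 : g ξ (φ (φ ξ)) = dEta η ξ (φ ξ) := hcontact _ _
    rw [hφφξ, map_zero] at h2
    rw [h1, hdanti, ← h2, neg_zero]
  -- g(X, ξ) = η X
  have hgξ : ∀ X, g X ξ = η X := by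
    intro X
    have h := hcompat X ξ
    rw [hφξ, map_zero, hQξ, (g X).map_smul_of_tower, η.map_smul_of_tower, hηξ] at h
    have h' : ν • g X ξ = ν • η X := by
      rw [eq_comm, sub_eq_zero] at h
      rw [h, mul_smul_comm, mul_one]
    have h2 := congrArg (fun x => ν⁻¹ • x) h'
    simpa [smul_smul, inv_mul_cancel₀ hν.ne'] using h2
  -- g(ξ, φY) = 0
  have hgξφ : ∀ Y, g ξ (φ Y) = 0 := by
    intro Y
    rw [hcontact, hdanti, ← hcontact, hφξ, map_zero, neg_zero]
  -- Lie derivative of η along ξ vanishes: ξ(ηY) = η[ξ,Y]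
  have hstar : ∀ Y, ξ (η Y) = η ⁅ξ, Y⁆ := by
    intro Y
    have h := dEta_eq_iff_aux η ξ Y _ ((hcontact ξ Y).symm.trans (hgξφ Y))
    rw [hηξ, Derivation.map_one_eq_zero, sub_zero, smul_zero, sub_eq_zero] at h
    exact h
  -- L_ξ φ = 0
  have hLφ : ∀ Y, ⁅ξ, φ Y⁆ = φ ⁅ξ, Y⁆ := by
    intro Y
    have hN := hN1 ξ Y
    rw [N1, nijenhuis, hφξ] at hN
    have hd0 : dEta η ξ Y = 0 := by rw [← hcontact, hgξφ]
    rw [hd0, smul_zero, zero_smul, add_zero, zero_lie_aux, zero_lie_aux, map_zero] at hN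
    -- hN : φ (φ ⁅ξ, Y⁆) + 0 - 0 - φ ⁅ξ, φ Y⁆ = 0
    have hφW : φ (φ ⁅ξ, Y⁆ - ⁅ξ, φ Y⁆) = 0 := by
      rw [map_sub]
      rw [add_zero, sub_zero] at hN
      exact hN
    set W := φ ⁅ξ, Y⁆ - ⁅ξ, φ Y⁆ with hWdef
    have hηW : η W = 0 := by
      rw [hWdef, map_sub, hηφ, ← hstar, hηφ, map_zero, sub_zero]
    have hQW : Q W = 0 := by
      have h := hφφ W
      rw [hφW, map_zero, hηW, zero_smul, add_zero] at h
      rw [← neg_zero, h, neg_neg]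
    have hW0 : W = 0 := hQ.injective (by rw [hQW, map_zero])
    rw [hWdef, sub_eq_zero] at hW0
    exact hW0.symm
  -- L_ξ dη = 0 (composed with contact condition and L_ξ φ = 0)
  have hKφ : ∀ X Y, ξ (g X (φ Y)) = g ⁅ξ, X⁆ (φ Y) + g X ⁅ξ, φ Y⁆ := by
    intro X Y
    rw [hLφ, hcontact, hcontact, hcontact, dEta, dEta, dEta, Derivation.map_smul, ← smul_add]
    congr 1
    have j : ⁅ξ, ⁅X, Y⁆⁆ = ⁅⁅ξ, X⁆, Y⁆ + ⁅X, ⁅ξ, Y⁆⁆ := LieRing.leibniz_lie ξ X Y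
    have c1 : ⁅ξ, X⁆ (η Y) = ξ (X (η Y)) - X (ξ (η Y)) := by rw [Derivation.commutator_apply]
    have c2 : ⁅ξ, Y⁆ (η X) = ξ (Y (η X)) - Y (ξ (η X)) := by rw [Derivation.commutator_apply]
    rw [map_sub, map_sub, c1, c2, hstar X, hstar Y, hstar ⁅X, Y⁆, j, map_add]
    abel
  -- Killing with second argument ξ
  have hKξ : ∀ X, ξ (g X ξ) = g ⁅ξ, X⁆ ξ + g X ⁅ξ, ξ⁆ := by
    intro X
    rw [lie_self_aux, map_zero, add_zero, hgξ, hgξ, hstar]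
  -- Killing is C^∞-linear in the second argument
  have hKsmul : ∀ (f : C^(⊤ : ℕ∞)⟮I, M; ℝ⟯) (X Z : VectorField I M),
      ξ (g X Z) = g ⁅ξ, X⁆ Z + g X ⁅ξ, Z⁆ →
      ξ (g X (f • Z)) = g ⁅ξ, X⁆ (f • Z) + g X ⁅ξ, f • Z⁆ := by
    intro f X Z h
    have e1 : (g X) (f • Z) = f * (g X) Z := by rw [(g X).map_smul, smul_eq_mul]
    have e2 : (g ⁅ξ, X⁆) (f • Z) = f * (g ⁅ξ, X⁆) Z := by
      rw [(g ⁅ξ, X⁆).map_smul, smul_eq_mul]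
    have e3 : (g X) ⁅ξ, f • Z⁆ = f * (g X) ⁅ξ, Z⁆ + ξ f * (g X) Z := by
      rw [bracket_smul_aux, map_add, (g X).map_smul, (g X).map_smul, smul_eq_mul, smul_eq_mul]
    rw [e1, e2, e3]
    have hl : ξ (f * (g X) Z) = f * ξ ((g X) Z) + (g X) Z * ξ f := by
      have := Derivation.leibniz ξ f ((g X) Z); simpa [smul_eq_mul] using this
    rw [hl]
    linear_combination f * h
  -- conclude using surjectivity of Q
  intro X Y
  obtain ⟨Z, hZ⟩ := hQ.surjective Y
  have hY : Y = (ν • η Z) • ξ - φ (φ Z) := by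
    have h := hφφ Z
    rw [hQξ] at h
    have : η Z • ν • ξ = (ν • η Z) • ξ := by
      rw [smul_assoc, smul_comm]
    rw [← hZ, h, ← this]
    abel
  have h1 : ξ (g X ((ν • η Z) • ξ)) = g ⁅ξ, X⁆ ((ν • η Z) • ξ) + g X ⁅ξ, (ν • η Z) • ξ⁆ :=
    hKsmul (ν • η Z) X ξ (hKξ X)
  have h2 : ξ (g X (φ (φ Z))) = g ⁅ξ, X⁆ (φ (φ Z)) + g X ⁅ξ, φ (φ Z)⁆ := hKφ X (φ Z)
  rw [hY, map_sub, map_sub, map_sub, lie_sub_aux, map_sub]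
  rw [h1, h2]
  abel
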